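/- Let 0 < c ≤ 1 and define φ(x) = (1/8)·(c³/x + 9c²x − cx³ − x⁵) for x > 0. Then for every x with 1−√(1−c) ≤ x ≤ √c, one has φ(x) ≤ max( φ(1−√(1−c)), φ(√c) ). -/

import Mathlib

/-- `φ(x) = (1/8)·(c³/x + 9c²x − cx³ − x⁵)`. -/
noncomputable def phi (c x : ℝ) : ℝ :=
  1 / 8 * (c ^ 3 / x + 9 * c ^ 2 * x - c * x ^ 3 - x ^ 5)

lemma phi_hasDerivAt (c y : ℝ) (hy : y ≠ 0) :
    HasDerivAt (phi c)
      (1 / 8 * (-(c ^ 3) / y ^ 2 + 9 * c ^ 2 - 3 * c * y ^ 2 - 5 * y ^ 4)) y := by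
  have h1 : HasDerivAt (fun y : ℝ => c ^ 3 * y⁻¹) (c ^ 3 * (-(y ^ 2)⁻¹)) y :=
    (hasDerivAt_inv hy).const_mul _
  have h2 : HasDerivAt (fun y : ℝ => 9 * c ^ 2 * y) (9 * c ^ 2) y := by
    simpa using (hasDerivAt_id y).const_mul (9 * c ^ 2)
  have h3 : HasDerivAt (fun y : ℝ => c * y ^ 3) (c * (3 * y ^ 2)) y := by
    simpa using (hasDerivAt_pow 3 y).const_mul c
  have h4 : HasDerivAt (fun y : ℝ => y ^ 5) (5 * y ^ 4) y := by
    simpa using hasDerivAt_pow 5 y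
  have H := (((h1.add h2).sub h3).sub h4).const_mul (1 / 8 : ℝ)
  have hfun : (fun y : ℝ => 1 / 8 * (c ^ 3 * y⁻¹ + 9 * c ^ 2 * y - c * y ^ 3 - y ^ 5))
      = phi c := by
    funext t; simp [phi, div_eq_mul_inv]
  simp only [Pi.add_apply, Pi.sub_apply] at H
  rw [hfun] at H
  refine H.congr_deriv ?_
  ring

theorem phi_max_at_endpoints (c : ℝ) (hc0 : 0 < c) (hc1 : c ≤ 1) (x : ℝ)
    (hx1 : 1 - Real.sqrt (1 - c) ≤ x) (hx2 : x ≤ Real.sqrt c) :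
    phi c x ≤ max (phi c (1 - Real.sqrt (1 - c))) (phi c (Real.sqrt c)) := by
  set a := 1 - Real.sqrt (1 - c) with ha_def
  set b := Real.sqrt c with hb_def
  have ha_pos : 0 < a := by
    have hs := Real.sq_sqrt (show (0:ℝ) ≤ 1 - c by linarith)
    have hnn := Real.sqrt_nonneg (1 - c)
    have : Real.sqrt (1 - c) < 1 := by nlinarith
    simp only [ha_def]; linarith
  have hx0 : 0 < x := lt_of_lt_of_le ha_pos hx1
  have hxc : x ^ 2 ≤ c := by
    have := Real.sq_sqrt hc0.le
    nlinarith [Real.sqrt_nonneg c]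
  by_cases hq : 5 * x ^ 4 + 8 * c * x ^ 2 - c ^ 2 ≤ 0
  · -- φ antitone on [a, x], so φ(x) ≤ φ(a)
    have hmono : AntitoneOn (phi c) (Set.Icc a x) := by
      apply antitoneOn_of_deriv_nonpos (convex_Icc a x)
      · intro y hy
        have hy0 : (0 : ℝ) < y := lt_of_lt_of_le ha_pos hy.1
        exact ((phi_hasDerivAt c y hy0.ne').differentiableAt).continuousAt.continuousWithinAt
      · intro y hy
        rw [interior_Icc] at hy
        exact ((phi_hasDerivAt c y (lt_of_lt_of_le ha_pos hy.1.le).ne').differentiableAt).differentiableWithinAt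
      · intro y hy
        rw [interior_Icc] at hy
        have hy0 : (0 : ℝ) < y := lt_of_lt_of_le ha_pos hy.1.le
        rw [(phi_hasDerivAt c y hy0.ne').deriv]
        have hyx : y ≤ x := hy.2.le
        have hp2 : y ^ 2 ≤ x ^ 2 := pow_le_pow_left₀ hy0.le hyx 2
        have hp4 : y ^ 4 ≤ x ^ 4 := pow_le_pow_left₀ hy0.le hyx 4
        have hyq : 5 * y ^ 4 + 8 * c * y ^ 2 - c ^ 2 ≤ 0 := by nlinarith
        have hyc : y ^ 2 ≤ c := le_trans hp2 hxc
        have key : (c - y ^ 2) * (5 * y ^ 4 + 8 * c * y ^ 2 - c ^ 2) ≤ 0 :=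
          mul_nonpos_of_nonneg_of_nonpos (by linarith) hyq
        have heq : 1 / 8 * (-(c ^ 3) / y ^ 2 + 9 * c ^ 2 - 3 * c * y ^ 2 - 5 * y ^ 4)
            = (c - y ^ 2) * (5 * y ^ 4 + 8 * c * y ^ 2 - c ^ 2) / (8 * y ^ 2) := by
          field_simp
          ring
        rw [heq]
        exact div_nonpos_of_nonpos_of_nonneg key (by positivity)
    have := hmono (Set.left_mem_Icc.mpr hx1) (Set.right_mem_Icc.mpr hx1) hx1
    exact le_trans this (le_max_left _ _)
  · -- φ monotone on [x, b], so φ(x) ≤ φ(b)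
    push_neg at hq
    have hmono : MonotoneOn (phi c) (Set.Icc x b) := by
      apply monotoneOn_of_deriv_nonneg (convex_Icc x b)
      · intro y hy
        have hy0 : (0 : ℝ) < y := lt_of_lt_of_le hx0 hy.1
        exact ((phi_hasDerivAt c y hy0.ne').differentiableAt).continuousAt.continuousWithinAt
      · intro y hy
        rw [interior_Icc] at hy
        exact ((phi_hasDerivAt c y (lt_of_lt_of_le hx0 hy.1.le).ne').differentiableAt).differentiableWithinAt
      · intro y hy
        rw [interior_Icc] at hy
        have hy0 : (0 : ℝ) < y := lt_of_lt_of_le hx0 hy.1.le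
        rw [(phi_hasDerivAt c y hy0.ne').deriv]
        have hxy : x ≤ y := hy.1.le
        have hp2 : x ^ 2 ≤ y ^ 2 := pow_le_pow_left₀ hx0.le hxy 2
        have hp4 : x ^ 4 ≤ y ^ 4 := pow_le_pow_left₀ hx0.le hxy 4
        have hyq : 0 ≤ 5 * y ^ 4 + 8 * c * y ^ 2 - c ^ 2 := by nlinarith
        have hyc : y ^ 2 ≤ c := by
          have hyb : y ≤ b := hy.2.le
          have := Real.sq_sqrt hc0.le
          nlinarith [Real.sqrt_nonneg c]
        have key : 0 ≤ (c - y ^ 2) * (5 * y ^ 4 + 8 * c * y ^ 2 - c ^ 2) :=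
          mul_nonneg (by linarith) hyq
        have heq : 1 / 8 * (-(c ^ 3) / y ^ 2 + 9 * c ^ 2 - 3 * c * y ^ 2 - 5 * y ^ 4)
            = (c - y ^ 2) * (5 * y ^ 4 + 8 * c * y ^ 2 - c ^ 2) / (8 * y ^ 2) := by
          field_simp
          ring
        rw [heq]
        exact div_nonneg key (by positivity)
    have := hmono (Set.left_mem_Icc.mpr hx2) (Set.right_mem_Icc.mpr hx2) hx2
    exact le_trans this (le_max_right _ _)
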